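/- Let g_0, g_1, ..., g_K ∈ R^m, c > 0, and let w* minimize the function F(w) = ⟨g_w, g_0⟩ + c‖g_0‖·‖g_w‖ over the probability simplex W, with g_{w*} ≠ 0. Then d* = g_0 + (c‖g_0‖/‖g_{w*}‖) g_{w*} is a solution of max_{d ∈ R^m} min_{i∈[K]} ⟨g_i, d⟩ subject to ‖d - g_0‖ ≤ c‖g_0‖, and the optimal value equals ⟨g_{w*}, g_0⟩ + c‖g_0‖·‖g_{w*}‖. -/

import Mathlib

open scoped RealInnerProductSpace

private lemma cagrad_aux (t N H X B r a α : ℝ) (ht : 0 < t) (hN : 0 < N) (hH : 0 < H)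
    (hX : 0 ≤ X) (hα : 0 ≤ α)
    (hXsq : X ^ 2 = N ^ 2 + 2 * t * B + t ^ 2 * H ^ 2)
    (hB1 : -(N * H) ≤ B) (hB2 : B ≤ N * H) (ht2 : t * H ≤ N / 2)
    (hstep : α * (N * N) - α * (X * N) ≤ t * r)
    (ha : a = -(r + α * B)) : a ≤ 2 * α * H ^ 2 * t := by
  have hD : N ^ 2 / 2 ≤ X * N + (N ^ 2 + t * B) := by nlinarith [mul_nonneg hX hN.le]
  have hgap : X * N - (N ^ 2 + t * B) ≤ 2 * t ^ 2 * H ^ 2 := by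
    rcases le_or_gt (X * N) (N ^ 2 + t * B) with hle | hlt
    · nlinarith
    · have hprod : (X * N - (N ^ 2 + t * B)) * (X * N + (N ^ 2 + t * B)) =
          t ^ 2 * (N ^ 2 * H ^ 2 - B ^ 2) := by nlinarith [hXsq]
      nlinarith [sq_nonneg t, sq_nonneg B]
  have hta : t * a ≤ α * (2 * t ^ 2 * H ^ 2) := by
    have := mul_le_mul_of_nonneg_left hgap hα
    nlinarith
  nlinarith [hta]

private lemma le_zero_of_le_linear (a C t₀ : ℝ) (ht₀ : 0 < t₀) (hC : 0 ≤ C)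
    (key : ∀ t, 0 < t → t ≤ t₀ → a ≤ C * t) : a ≤ 0 := by
  by_contra hpos
  push_neg at hpos
  have hC0 : 0 < C := by
    by_contra hC'
    push_neg at hC'
    have := key t₀ ht₀ le_rfl
    nlinarith
  have hCne : C ≠ 0 := hC0.ne'
  have h1 := key (min t₀ (a / (2 * C))) (lt_min ht₀ (by positivity)) (min_le_left _ _)
  have h2 : C * min t₀ (a / (2 * C)) ≤ C * (a / (2 * C)) :=
    mul_le_mul_of_nonneg_left (min_le_right _ _) hC0.le
  have h3 : C * (a / (2 * C)) = a / 2 := by field_simp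
  linarith

set_option maxHeartbeats 2000000

/-- Strong duality for the CAGrad subproblem. -/
theorem stmt_1 (m K : ℕ) (hK : 0 < K) (c : ℝ) (hc : 0 < c)
    (g₀ : EuclideanSpace ℝ (Fin m)) (g : Fin K → EuclideanSpace ℝ (Fin m))
    (w : Fin K → ℝ) (hw : w ∈ stdSimplex ℝ (Fin K))
    (hmin : ∀ v ∈ stdSimplex ℝ (Fin K),
      ⟪∑ i, w i • g i, g₀⟫ + c * ‖g₀‖ * ‖∑ i, w i • g i‖ ≤
        ⟪∑ i, v i • g i, g₀⟫ + c * ‖g₀‖ * ‖∑ i, v i • g i‖)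
    (hne : (∑ i, w i • g i) ≠ 0) :
    haveI : Nonempty (Fin K) := Fin.pos_iff_nonempty.mp hK
    let gw := ∑ i, w i • g i
    let d := g₀ + (c * ‖g₀‖ / ‖gw‖) • gw
    ‖d - g₀‖ ≤ c * ‖g₀‖ ∧
      (⨅ i : Fin K, ⟪g i, d⟫) = ⟪gw, g₀⟫ + c * ‖g₀‖ * ‖gw‖ ∧
      ∀ d' : EuclideanSpace ℝ (Fin m), ‖d' - g₀‖ ≤ c * ‖g₀‖ →
        (⨅ i : Fin K, ⟪g i, d'⟫) ≤ ⟪gw, g₀⟫ + c * ‖g₀‖ * ‖gw‖ := by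
  haveI : Nonempty (Fin K) := Fin.pos_iff_nonempty.mp hK
  intro gw d
  have hgw_eq : gw = ∑ i, w i • g i := rfl
  have hd : d = g₀ + (c * ‖g₀‖ / ‖gw‖) • gw := rfl
  clear_value gw d
  rw [← hgw_eq] at hmin hne
  have hgw : (0:ℝ) < ‖gw‖ := norm_pos_iff.mpr hne
  obtain ⟨α, hαdef⟩ : ∃ α : ℝ, α = c * ‖g₀‖ / ‖gw‖ := ⟨_, rfl⟩
  have hα : 0 ≤ α := by rw [hαdef]; exact div_nonneg (mul_nonneg hc.le (norm_nonneg _)) (norm_nonneg _)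
  have hαN : α * ‖gw‖ = c * ‖g₀‖ := by rw [hαdef]; exact div_mul_cancel₀ _ (ne_of_gt hgw)
  rw [← hαdef] at hd
  have hα0 : 0 ≤ c * ‖g₀‖ / ‖gw‖ := div_nonneg (mul_nonneg hc.le (norm_nonneg _)) (norm_nonneg _)
  -- part 1
  have h1 : ‖d - g₀‖ ≤ c * ‖g₀‖ := by
    have : d - g₀ = α • gw := by rw [hd]; abel
    rw [this, norm_smul, Real.norm_of_nonneg hα, hαN]
  -- value
  have hFw : ⟪gw, d⟫ = ⟪gw, g₀⟫ + c * ‖g₀‖ * ‖gw‖ := by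
    rw [hd, inner_add_right, real_inner_smul_right, real_inner_self_eq_norm_sq]
    rw [← hαN]; ring
  obtain ⟨hw0, hw1⟩ := hw
  -- convex combination bound
  have hcomb : ∀ d' : EuclideanSpace ℝ (Fin m), (⨅ i, ⟪g i, d'⟫) ≤ ⟪gw, d'⟫ := by
    intro d'
    have hexp : ⟪gw, d'⟫ = ∑ i, w i * ⟪g i, d'⟫ := by
      rw [hgw_eq, sum_inner]
      exact Finset.sum_congr rfl fun i _ => real_inner_smul_left _ _ _
    have hbdd : BddBelow (Set.range fun i => ⟪g i, d'⟫) :=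
      (Set.finite_range _).bddBelow
    calc (⨅ i, ⟪g i, d'⟫) = ∑ i, w i * (⨅ j, ⟪g j, d'⟫) := by
          rw [← Finset.sum_mul, hw1, one_mul]
      _ ≤ ∑ i, w i * ⟪g i, d'⟫ := by
          refine Finset.sum_le_sum fun i _ => ?_
          exact mul_le_mul_of_nonneg_left (ciInf_le hbdd i) (hw0 i)
      _ = ⟪gw, d'⟫ := hexp.symm
  -- weak duality (part 3)
  have h3 : ∀ d' : EuclideanSpace ℝ (Fin m), ‖d' - g₀‖ ≤ c * ‖g₀‖ →
      (⨅ i : Fin K, ⟪g i, d'⟫) ≤ ⟪gw, g₀⟫ + c * ‖g₀‖ * ‖gw‖ := by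
    intro d' hd'
    refine (hcomb d').trans ?_
    have heq : ⟪gw, d'⟫ = ⟪gw, g₀⟫ + ⟪gw, d' - g₀⟫ := by
      rw [inner_sub_right]; ring
    rw [heq]
    have hA : ⟪gw, d' - g₀⟫ ≤ ‖gw‖ * ‖d' - g₀‖ := real_inner_le_norm _ _
    have hB : ‖gw‖ * ‖d' - g₀‖ ≤ ‖gw‖ * (c * ‖g₀‖) :=
      mul_le_mul_of_nonneg_left hd' (norm_nonneg _)
    nlinarith
  -- key lower bound: each ⟪g i, d⟫ ≥ F(w)
  have hlow : ∀ i : Fin K, ⟪gw, g₀⟫ + c * ‖g₀‖ * ‖gw‖ ≤ ⟪g i, d⟫ := by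
    intro i
    obtain ⟨h, hh⟩ : ∃ h : EuclideanSpace ℝ (Fin m), h = g i - gw := ⟨_, rfl⟩
    have hgi : g i = gw + h := by rw [hh]; abel
    by_cases hh0 : h = 0
    · rw [hgi, hh0, add_zero, hFw]
    · have hH : (0:ℝ) < ‖h‖ := norm_pos_iff.mpr hh0
      have hsuff : (⟪gw, g₀⟫ + c * ‖g₀‖ * ‖gw‖) - ⟪g i, d⟫ ≤ 0 := by
        set t₀ : ℝ := min 1 (‖gw‖ / (2 * ‖h‖)) with ht₀def
        have ht₀ : 0 < t₀ := lt_min one_pos (div_pos hgw (by positivity))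
        refine le_zero_of_le_linear _ (2 * α * ‖h‖ ^ 2) t₀ ht₀ (by positivity) ?_
        intro t ht htle
        have ht1 : t ≤ 1 := htle.trans (min_le_left _ _)
        have ht2 : t * ‖h‖ ≤ ‖gw‖ / 2 := by
          have h' := htle.trans (min_le_right _ _)
          have := (le_div_iff₀ (by positivity : (0:ℝ) < 2 * ‖h‖)).mp h'
          nlinarith
        set v : Fin K → ℝ := fun j => (1 - t) * w j + t * (if j = i then 1 else 0) with hvdef
        have hvmem : v ∈ stdSimplex ℝ (Fin K) := by
          constructor
          · intro j
            have hwj := hw0 j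
            by_cases hji : j = i
            · subst hji
              simp only [hvdef, ite_true, mul_one]
              nlinarith
            · simp only [hvdef, hji, ite_false, mul_zero, add_zero]
              nlinarith
          · simp only [hvdef]
            rw [Finset.sum_add_distrib, ← Finset.mul_sum, ← Finset.mul_sum, hw1,
              Finset.sum_ite_eq' Finset.univ i (fun _ => (1:ℝ))]
            simp
        have hgv : (∑ j, v j • g j) = gw + t • h := by
          simp only [hvdef, add_smul, mul_smul]
          rw [Finset.sum_add_distrib, ← Finset.smul_sum, ← Finset.smul_sum]
          have hone : ∑ j, (if j = i then (1:ℝ) else 0) • g j = g i := by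
            simp [ite_smul]
          rw [hone, hgi, ← hgw_eq]
          module
        have hmin' := hmin v hvmem
        rw [hgv] at hmin'
        have hip : ⟪gw + t • h, g₀⟫ = ⟪gw, g₀⟫ + t * ⟪h, g₀⟫ := by
          rw [inner_add_left, real_inner_smul_left]
        rw [hip, ← hαN] at hmin'
        -- hmin' : ⟪gw,g₀⟫ + α‖gw‖‖gw‖ ≤ ⟪gw,g₀⟫ + t⟪h,g₀⟫ + α‖gw‖·X
        have hXsq : ‖gw + t • h‖ ^ 2 = ‖gw‖ ^ 2 + 2 * t * ⟪gw, h⟫ + t ^ 2 * ‖h‖ ^ 2 := by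
          rw [@norm_add_sq_real, real_inner_smul_right, norm_smul,
            Real.norm_of_nonneg ht.le]
          ring
        have hBle := abs_real_inner_le_norm gw h
        have hstep : α * (‖gw‖ * ‖gw‖) - α * (‖gw + t • h‖ * ‖gw‖) ≤ t * ⟪h, g₀⟫ := by
          linarith [hmin']

        have hgid : ⟪g i, d⟫ = ⟪gw, g₀⟫ + α * ‖gw‖ ^ 2 + ⟪h, g₀⟫ + α * ⟪gw, h⟫ := by
          rw [hgi, hd]
          simp only [inner_add_left, inner_add_right, real_inner_smul_right,
            real_inner_self_eq_norm_sq]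
          rw [real_inner_comm h gw]
          ring
        have ha_eq : (⟪gw, g₀⟫ + c * ‖g₀‖ * ‖gw‖) - ⟪g i, d⟫ = -(⟪h, g₀⟫ + α * ⟪gw, h⟫) := by
          rw [hgid, ← hαN]; ring
        exact cagrad_aux t ‖gw‖ ‖h‖ ‖gw + t • h‖ ⟪gw, h⟫ ⟪h, g₀⟫ _ α ht hgw hH
          (norm_nonneg _) hα hXsq (neg_le_of_abs_le hBle) (le_of_abs_le hBle) ht2 hstep ha_eq
      linarith
  refine ⟨h1, ?_, h3⟩
  exact le_antisymm ((hcomb d).trans_eq hFw) (le_ciInf hlow)
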